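/- Let σ : [0,∞) → [0,∞) be a function and (xₙ) a strictly increasing sequence with x₁ = 0 and, for all n ≥ 2: σ(xₙ) ≥ 2^{n−i}·σ(xᵢ) for 1 ≤ i ≤ n−1, and 2·x_{n} ≤ x_{n+1} for all n. Define σ̃(t) := n·σ(t) − ∑_{i=1}^{n} σ(xᵢ) for t ∈ [xₙ, x_{n+1}). Then for all n ≥ 2 and t ∈ [xₙ, x_{n+1}): (n−2)·σ(t) ≤ σ̃(t) ≤ n·σ(t). In particular σ(t) = o(σ̃(t)) as t → ∞ if σ(t) → ∞. -/

import Mathlib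

open Set Filter

theorem stmt18 (σ : ℝ → ℝ) (hmono : MonotoneOn σ (Ici 0))
    (hpos : ∀ t ≥ (0:ℝ), 0 ≤ σ t)
    (x : ℕ → ℝ) (hsm : StrictMono x) (hx1 : x 1 = 0)
    (hgeom : ∀ n : ℕ, 1 ≤ n → 2 * x n ≤ x (n + 1))
    (hdom : ∀ n : ℕ, 2 ≤ n → ∀ i : ℕ, 1 ≤ i → i ≤ n - 1 →
        (2:ℝ) ^ (n - i) * σ (x i) ≤ σ (x n)) :
    ∀ n : ℕ, 2 ≤ n → ∀ t : ℝ, x n ≤ t → t < x (n + 1) →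
      (n - 2 : ℝ) * σ t ≤ (n : ℝ) * σ t - ∑ i ∈ Finset.Icc 1 n, σ (x i) ∧
      (n : ℝ) * σ t - ∑ i ∈ Finset.Icc 1 n, σ (x i) ≤ (n : ℝ) * σ t := by
  have hxnn : ∀ i : ℕ, 1 ≤ i → (0:ℝ) ≤ x i := fun i hi => by
    rw [← hx1]; exact hsm.monotone hi
  have hσnn : ∀ i : ℕ, 1 ≤ i → 0 ≤ σ (x i) := fun i hi => hpos _ (hxnn i hi)
  -- key: sum ≤ 2 σ(x n)
  have key : ∀ n : ℕ, 1 ≤ n → ∑ i ∈ Finset.Icc 1 n, σ (x i) ≤ 2 * σ (x n) := by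
    intro n hn
    induction n with
    | zero => omega
    | succ m ih =>
      rcases Nat.eq_or_lt_of_le hn with h | h
      · simp [← h]
        linarith [hσnn 1 le_rfl]
      · have hm : 1 ≤ m := by omega
        have hsum := ih hm
        have hstep := hdom (m + 1) (by omega) m hm (by omega)
        have : m + 1 - m = 1 := by omega
        rw [this, pow_one] at hstep
        rw [Finset.sum_Icc_succ_top (by omega : 1 ≤ m + 1)]
        linarith
  intro n hn t hxt hlt
  have ht0 : (0:ℝ) ≤ t := le_trans (hxnn n (by omega)) hxt
  have hσt : σ (x n) ≤ σ t := hmono (hxnn n (by omega)) ht0 hxt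
  have hsum0 : 0 ≤ ∑ i ∈ Finset.Icc 1 n, σ (x i) :=
    Finset.sum_nonneg fun i hi => hσnn i (Finset.mem_Icc.mp hi).1
  have hsum2 : ∑ i ∈ Finset.Icc 1 n, σ (x i) ≤ 2 * σ t := by
    calc ∑ i ∈ Finset.Icc 1 n, σ (x i) ≤ 2 * σ (x n) := key n (by omega)
    _ ≤ 2 * σ t := by linarith
  constructor <;> linarith
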